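/- arXiv:1512.00116 — 2 statements merged into one kernel-verified Lean document; each statement's English description precedes it below -/
import Mathlib

section
/- The Schur polynomial indexed by the staircase partition ρ_n = (n-1, n-2, …, 1, 0) in n variables factors as a product: s_{ρ_n}(x_1,…,x_n) = ∏_{1 ≤ i < j ≤ n} (x_i + x_j). -/
open Finset

noncomputable section

/-- The field of rational functions in `n` variables over `ℚ`. -/
abbrev RF (n : ℕ) := FractionRing (MvPolynomial (Fin n) ℚ)

/-- The variables `x_1, …, x_n`. -/
def xv (n : ℕ) (i : Fin n) : RF n :=
  algebraMap (MvPolynomial (Fin n) ℚ) (RF n) (MvPolynomial.X i)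

/-- The alternant `det(x_i^{e_j})`. -/
def alternant (n : ℕ) (e : Fin n → ℕ) : RF n :=
  Matrix.det (Matrix.of fun i j : Fin n => xv n i ^ e j)

lemma prod_pairs {n : ℕ} {M : Type*} [CommMonoid M] (f : Fin n → Fin n → M) :
    ∏ p ∈ Finset.univ.filter (fun p : Fin n × Fin n => p.1 < p.2), f p.1 p.2
      = ∏ i, ∏ j ∈ Finset.Ioi i, f i j := by
  rw [Finset.prod_sigma' Finset.univ (fun i => Finset.Ioi i) f]
  refine (Finset.prod_nbij (fun x => (x.1, x.2)) ?_ ?_ ?_ ?_).symm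
  · rintro ⟨a, b⟩ h
    simp only [Finset.mem_sigma, Finset.mem_Ioi] at h
    simp [h.2]
  · rintro ⟨a, b⟩ _ ⟨c, d⟩ _ h
    simp only [Prod.mk.injEq] at h
    obtain ⟨rfl, rfl⟩ := h
    rfl
  · rintro ⟨a, b⟩ h
    simp only [Finset.coe_filter, Set.mem_setOf_eq] at h
    exact ⟨⟨a, b⟩, by simp [h.2], rfl⟩
  · intros; rfl

lemma xv_injective (n : ℕ) : Function.Injective (xv n) := by
  intro i j h
  exact MvPolynomial.X_injective
    (IsFractionRing.injective (MvPolynomial (Fin n) ℚ) (RF n) h)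

/-- The Schur polynomial indexed by the staircase partition
`ρ_n = (n-1, n-2, …, 1, 0)`, i.e. `det(x_i^{2(n-j)})/det(x_i^{n-j})`, factors as the
product `∏_{i<j} (x_i + x_j)`. -/
theorem schur_staircase_factorization (n : ℕ) (hn : 1 ≤ n) :
    alternant n (fun j => 2 * (n - 1 - (j : ℕ))) / alternant n (fun j => n - 1 - (j : ℕ))
      = ∏ p ∈ Finset.univ.filter (fun p : Fin n × Fin n => p.1 < p.2),
          (xv n p.1 + xv n p.2) := by
  set x := xv n with hx
  set s : RF n := ((Equiv.Perm.sign (Fin.revPerm (n := n)) : ℤ) : RF n) with hs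
  have hs0 : s ≠ 0 := by
    rcases Int.units_eq_one_or (Equiv.Perm.sign (Fin.revPerm (n := n))) with h | h <;>
      simp [hs, h]
  have hden : alternant n (fun j => n - 1 - (j : ℕ)) = s * (Matrix.vandermonde x).det := by
    rw [hs]
    unfold alternant
    rw [show (Matrix.of fun i j : Fin n => xv n i ^ (n - 1 - (j : ℕ)))
        = (Matrix.vandermonde x).submatrix id (Fin.revPerm (n := n)) from ?_,
    ]
    · exact Matrix.det_permute' _ _
    · ext i j
      simp [Matrix.vandermonde, Fin.val_rev, hx]
      congr 1
      omega
  have hnum : alternant n (fun j => 2 * (n - 1 - (j : ℕ)))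
      = s * (Matrix.vandermonde (fun i => x i ^ 2)).det := by
    rw [hs]
    unfold alternant
    rw [show (Matrix.of fun i j : Fin n => xv n i ^ (2 * (n - 1 - (j : ℕ))))
        = (Matrix.vandermonde (fun i => x i ^ 2)).submatrix id (Fin.revPerm (n := n)) from ?_,
    ]
    · exact Matrix.det_permute' _ _
    · ext i j
      simp only [Matrix.of_apply, Matrix.submatrix_apply, id_eq, Matrix.vandermonde,
        Fin.revPerm_apply, Fin.val_rev, ← pow_mul, hx]
      congr 1
      omega
  have hVne : (Matrix.vandermonde x).det ≠ 0 := by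
    rw [Matrix.det_vandermonde]
    apply Finset.prod_ne_zero_iff.2
    intro i _
    apply Finset.prod_ne_zero_iff.2
    intro j hj
    rw [Finset.mem_Ioi] at hj
    rw [sub_ne_zero]
    exact fun h => absurd (xv_injective n h.symm) (ne_of_lt hj)
  have hfac : (Matrix.vandermonde (fun i => x i ^ 2)).det
      = (Matrix.vandermonde x).det * ∏ i, ∏ j ∈ Finset.Ioi i, (x i + x j) := by
    rw [Matrix.det_vandermonde, Matrix.det_vandermonde, ← Finset.prod_mul_distrib]
    apply Finset.prod_congr rfl
    intro i _
    rw [← Finset.prod_mul_distrib]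
    apply Finset.prod_congr rfl
    intro j _
    ring
  rw [hnum, hden, hfac, prod_pairs (fun i j => x i + x j),
    mul_div_mul_left _ _ hs0, mul_div_cancel_left₀ _ hVne]

end
end

section
/- Define wt_r(λ) = Σ_{i=r}^{n} δ_{λ_i} in the lattice P (with δ_{-a} = -δ_a), and say λ ⪰ μ iff wt_r(λ) - wt_r(μ) ∈ Q^+ for all 1 ≤ r ≤ n and wt_1(λ) = wt_1(μ), where Q^+ is the nonnegative span of the type-C simple roots α_0 = -2δ_{1/2}, α_i = δ_{i-1/2} - δ_{i+1/2}. Then ⪰ is a partial order on Λ_{1/2+ℤ} = (1/2+ℤ)^n, and for λ ⪰ μ the interval {ν : λ ⪰ ν ⪰ μ} is finite. -/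
noncomputable section
open Finset

/-- Half-odd-integers. -/
abbrev HO : Type := {x : ℚ // ∃ k : ℤ, x = k + 1/2}

lemma HO.ne_zero (r : HO) : r.val ≠ 0 := by
  obtain ⟨k, hk⟩ := r.2
  rw [hk]; intro h
  have h2 : (2 * k + 1 : ℚ) = 0 := by linarith
  have h3 : (2 * k + 1 : ℤ) = 0 := by exact_mod_cast h2
  omega

/-- Negation of a half-odd-integer. -/
def HO.neg (r : HO) : HO :=
  ⟨-r.val, by obtain ⟨k, hk⟩ := r.2; exact ⟨-k - 1, by rw [hk]; push_cast; ring⟩⟩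

/-- Positive half-odd-integers `1/2, 3/2, …`, indexing the basis `δ_r` of `P`. -/
abbrev HOpos : Type := {r : HO // 0 < r.val}

/-- The lattice `P`, with basis `δ_r` for `r ∈ 1/2 + ℤ_{>0}`. -/
abbrev Plat : Type := HOpos →₀ ℤ

/-- `δ_r ∈ P` for any half-odd-integer `r`, with `δ_{-r} = -δ_r`. -/
def deltaP (r : HO) : Plat :=
  if h : 0 < r.val then Finsupp.single ⟨r, h⟩ 1
  else - Finsupp.single ⟨HO.neg r,
      by simpa [HO.neg] using lt_of_le_of_ne (not_lt.mp h) (HO.ne_zero r)⟩ 1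

/-- The positive half-odd-integer `i + 1/2`. -/
def pHO (i : ℕ) : HOpos :=
  ⟨⟨(i : ℚ) + 1/2, (i : ℤ), by push_cast; ring⟩, by positivity⟩

/-- The type-`C` simple roots `α_0 = -2δ_{1/2}`, `α_i = δ_{i-1/2} - δ_{i+1/2}`. -/
def alphaC : ℕ → Plat
  | 0 => -(2 • Finsupp.single (pHO 0) 1)
  | (i + 1) => Finsupp.single (pHO i) 1 - Finsupp.single (pHO (i + 1)) 1

/-- `Q^+`: the nonnegative span of the simple roots. -/
def Qplus : AddSubmonoid Plat := AddSubmonoid.closure (Set.range alphaC)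

/-- `wt_r(λ) = Σ_{i=r}^{n} δ_{λ_i}`. -/
def wt (n : ℕ) (r : Fin n) (lam : Fin n → HO) : Plat :=
  ∑ i ∈ Finset.univ.filter (fun i : Fin n => r ≤ i), deltaP (lam i)

/-- The Bruhat ordering: `λ ⪰ μ` iff `wt_1(λ) = wt_1(μ)` and
`wt_r(λ) - wt_r(μ) ∈ Q^+` for all `r`. -/
def succeq (n : ℕ) (lam mu : Fin n → HO) : Prop :=
  (∑ i, deltaP (lam i)) = (∑ i, deltaP (mu i)) ∧
    ∀ r : Fin n, wt n r lam - wt n r mu ∈ Qplus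

/-- Index of a positive half-odd-integer. -/
def idx (e : HOpos) : ℕ := (⌊e.val.val⌋).toNat

lemma idx_pHO (j : ℕ) : idx (pHO j) = j := by
  have h : ⌊((j : ℚ) + 1/2)⌋ = (j : ℤ) := by
    rw [Int.floor_eq_iff]
    constructor <;> push_cast <;> linarith
  simp only [idx, pHO]
  rw [h]
  simp

lemma pHO_idx (e : HOpos) : pHO (idx e) = e := by
  obtain ⟨⟨x, k, hk⟩, hpos⟩ := e
  have hk0 : 0 ≤ k := by
    by_contra h
    push_neg at h
    have : (k : ℚ) ≤ -1 := by exact_mod_cast Int.le_sub_one_of_lt h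
    simp only at hpos
    rw [hk] at hpos; linarith
  have hfl : ⌊x⌋ = k := by
    rw [hk, Int.floor_eq_iff]
    constructor <;> push_cast <;> linarith
  have hidx : idx ⟨⟨x, k, hk⟩, hpos⟩ = k.toNat := by simp [idx, hfl]
  rw [hidx]
  apply Subtype.ext; apply Subtype.ext
  simp only [pHO, hk]
  have : ((k.toNat : ℤ) : ℚ) = (k : ℚ) := by exact_mod_cast Int.toNat_of_nonneg hk0
  push_cast at this ⊢
  linarith

/-- The tail-sum functional `T k q = ∑_{j ≥ k} q(δ_{j+1/2})`. -/
def Tf (k : ℕ) : Plat →+ ℤ :=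
  Finsupp.liftAddHom (fun e => if k ≤ idx e then AddMonoidHom.id ℤ else 0)

lemma Tf_single (k : ℕ) (e : HOpos) (v : ℤ) :
    Tf k (Finsupp.single e v) = if k ≤ idx e then v else 0 := by
  simp only [Tf, Finsupp.liftAddHom_apply_single]
  split <;> simp

lemma Tf_recon (j : ℕ) (q : Plat) : q (pHO j) = Tf j q - Tf (j + 1) q := by
  induction q using Finsupp.induction₂ with
  | zero => simp
  | add_single e v f _ _ hf =>
    have hs : (Finsupp.single e v : Plat) (pHO j) = Tf j (Finsupp.single e v) -
        Tf (j + 1) (Finsupp.single e v) := by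
      rw [Tf_single, Tf_single]
      rcases eq_or_ne e (pHO j) with rfl | hne
      · simp [idx_pHO]
      · have hij : idx e ≠ j := fun h => hne (by rw [← pHO_idx e, h])
        rw [Finsupp.single_apply, if_neg hne]
        rcases lt_or_gt_of_ne hij with h | h
        · rw [if_neg (by omega), if_neg (by omega)]; ring
        · rw [if_pos (by omega), if_pos (by omega)]; ring
    simp only [Finsupp.add_apply, map_add, hf, hs]; ring

lemma Tf_inj {q1 q2 : Plat} (h : ∀ k, Tf k q1 = Tf k q2) : q1 = q2 := by
  ext e
  rw [← pHO_idx e, Tf_recon, Tf_recon, h, h]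

lemma Tf_nonpos_of_mem {q : Plat} (hq : q ∈ Qplus) (k : ℕ) : Tf k q ≤ 0 := by
  induction hq using AddSubmonoid.closure_induction with
  | mem x hx =>
    obtain ⟨i, rfl⟩ := hx
    match i with
    | 0 =>
      simp only [alphaC, map_neg, map_nsmul, Tf_single, idx_pHO]
      split <;> simp
    | (i + 1) =>
      simp only [alphaC, map_sub, Tf_single, idx_pHO]
      split <;> split <;> omega
  | zero => simp
  | add x y _ _ hx hy => rw [map_add]; omega

lemma Qplus_eq_zero {q : Plat} (hq : q ∈ Qplus) (hq' : -q ∈ Qplus) : q = 0 := by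
  apply Tf_inj
  intro k
  have h1 := Tf_nonpos_of_mem hq k
  have h2 := Tf_nonpos_of_mem hq' k
  rw [map_neg] at h2
  simp only [map_zero]
  omega

lemma deltaP_inj {r s : HO} (h : deltaP r = deltaP s) : r = s := by
  unfold deltaP at h
  split at h <;> split at h
  case isTrue.isTrue h1 h2 =>
    have := (Finsupp.single_left_inj (one_ne_zero)).mp h
    exact Subtype.ext (congrArg (fun x => x.val.val) this)
  case isTrue.isFalse h1 h2 =>
    have := DFunLike.congr_fun h ⟨r, h1⟩
    simp [Finsupp.single_apply] at this
    split at this <;> omega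
  case isFalse.isTrue h1 h2 =>
    have := DFunLike.congr_fun h ⟨s, h2⟩
    simp [Finsupp.single_apply] at this
    split at this <;> omega
  case isFalse.isFalse h1 h2 =>
    rw [neg_inj] at h
    have := (Finsupp.single_left_inj (one_ne_zero)).mp h
    have h3 : HO.neg r = HO.neg s := Subtype.ext (congrArg (fun x => x.val.val) this)
    have := congrArg (fun x : HO => x.val) h3
    simp only [HO.neg, neg_inj] at this
    exact Subtype.ext this

/-- Sum of `deltaP (lam i)` over indices with value `≥ k`, as a function of `k : ℕ`. -/
def wtN (n : ℕ) (k : ℕ) (lam : Fin n → HO) : Plat :=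
  ∑ i ∈ Finset.univ.filter (fun i : Fin n => k ≤ i.val), deltaP (lam i)

lemma wt_eq_wtN (n : ℕ) (r : Fin n) (lam : Fin n → HO) : wt n r lam = wtN n r.val lam := rfl

lemma wtN_step (n : ℕ) (k : ℕ) (hk : k < n) (lam : Fin n → HO) :
    wtN n k lam = deltaP (lam ⟨k, hk⟩) + wtN n (k + 1) lam := by
  unfold wtN
  have hins : Finset.univ.filter (fun i : Fin n => k ≤ i.val)
      = insert ⟨k, hk⟩ (Finset.univ.filter (fun i : Fin n => k + 1 ≤ i.val)) := by
    ext i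
    simp [Finset.mem_insert, Fin.ext_iff]
    omega
  rw [hins, Finset.sum_insert (by simp)]

lemma wtN_top (n : ℕ) (k : ℕ) (hk : n ≤ k) (lam : Fin n → HO) : wtN n k lam = 0 := by
  unfold wtN
  rw [Finset.filter_false_of_mem, Finset.sum_empty]
  intro i _
  simp only [not_le]
  omega

lemma Tf_eventually_zero (c : Plat) :
    ∀ k, (c.support.sup idx) + 1 ≤ k → Tf k c = 0 := by
  intro k hk
  have : Tf k c = c.sum (fun e v => if k ≤ idx e then v else 0) := by
    rw [Tf, Finsupp.liftAddHom_apply]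
    congr 1
    ext e v
    split <;> simp
  rw [this, Finsupp.sum]
  apply Finset.sum_eq_zero
  intro e he
  have : idx e ≤ c.support.sup idx := Finset.le_sup he
  rw [if_neg (by omega)]

lemma interval_finite (c : Plat) : {q : Plat | q ∈ Qplus ∧ c - q ∈ Qplus}.Finite := by
  set M := (c.support.sup idx) + 1 with hM
  set S := {q : Plat | q ∈ Qplus ∧ c - q ∈ Qplus}
  -- every q in S has Tf k q = 0 for k ≥ M, and Tf k c ≤ Tf k q ≤ 0 always
  have hbound : ∀ q ∈ S, ∀ k, Tf k c ≤ Tf k q ∧ Tf k q ≤ 0 := by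
    intro q hq k
    have h1 := Tf_nonpos_of_mem hq.1 k
    have h2 := Tf_nonpos_of_mem hq.2 k
    rw [map_sub] at h2
    omega
  have hzero : ∀ q ∈ S, ∀ k, M ≤ k → Tf k q = 0 := by
    intro q hq k hk
    have := hbound q hq k
    have := Tf_eventually_zero c k hk
    omega
  apply Set.Finite.of_finite_image (f := fun q => fun k : Fin M => Tf k.val q)
  · apply Set.Finite.subset (Set.Finite.pi (fun k : Fin M => Set.finite_Icc (Tf k.val c) 0))
    rintro g ⟨q, hq, rfl⟩
    intro k _
    exact ⟨(hbound q hq k.val).1, (hbound q hq k.val).2⟩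
  · intro q1 hq1 q2 hq2 h
    apply Tf_inj
    intro k
    by_cases hk : k < M
    · exact congrFun h ⟨k, hk⟩
    · rw [hzero q1 hq1 k (by omega), hzero q2 hq2 k (by omega)]

lemma eq_of_wt_eq {n : ℕ} (nu1 nu2 : Fin n → HO)
    (h : ∀ r : Fin n, wt n r nu1 = wt n r nu2) : nu1 = nu2 := by
  have hk : ∀ k : ℕ, wtN n k nu1 = wtN n k nu2 := by
    intro k
    by_cases h' : k < n
    · have := h ⟨k, h'⟩
      rwa [wt_eq_wtN, wt_eq_wtN] at this
    · rw [wtN_top n k (by omega), wtN_top n k (by omega)]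
  funext i
  apply deltaP_inj
  have s1 := wtN_step n i.val i.isLt nu1
  have s2 := wtN_step n i.val i.isLt nu2
  have e1 : deltaP (nu1 i) = wtN n i.val nu1 - wtN n (i.val + 1) nu1 := by
    rw [s1]; abel
  have e2 : deltaP (nu2 i) = wtN n i.val nu2 - wtN n (i.val + 1) nu2 := by
    rw [s2]; abel
  rw [e1, e2, hk i.val, hk (i.val + 1)]


/-- `⪰` is a partial order on `(1/2+ℤ)^n` (reflexive, antisymmetric, transitive),
and each interval `{ν : λ ⪰ ν ⪰ μ}` is finite. -/
theorem succeq_partial_order_and_locally_finite (n : ℕ) (hn : 1 ≤ n) :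
    (∀ lam : Fin n → HO, succeq n lam lam) ∧
    (∀ lam mu : Fin n → HO, succeq n lam mu → succeq n mu lam → lam = mu) ∧
    (∀ lam mu nu : Fin n → HO, succeq n lam mu → succeq n mu nu → succeq n lam nu) ∧
    (∀ lam mu : Fin n → HO, succeq n lam mu →
      {nu : Fin n → HO | succeq n lam nu ∧ succeq n nu mu}.Finite) := by
  refine ⟨?_, ?_, ?_, ?_⟩
  · -- reflexivity
    intro lam
    exact ⟨rfl, fun r => by rw [sub_self]; exact zero_mem Qplus⟩
  · -- antisymmetry
    intro lam mu h1 h2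
    apply eq_of_wt_eq
    intro r
    have hq := h1.2 r
    have hq' := h2.2 r
    have : -(wt n r lam - wt n r mu) ∈ Qplus := by
      rw [neg_sub]; exact hq'
    have := Qplus_eq_zero hq this
    rw [sub_eq_zero] at this
    exact this
  · -- transitivity
    intro lam mu nu h1 h2
    refine ⟨h1.1.trans h2.1, fun r => ?_⟩
    have := add_mem (h1.2 r) (h2.2 r)
    rwa [sub_add_sub_cancel] at this
  · -- local finiteness
    intro lam mu _
    have hB : ∀ r : Fin n,
        {x : Plat | wt n r lam - x ∈ Qplus ∧ x - wt n r mu ∈ Qplus}.Finite := by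
      intro r
      have heq : {x : Plat | wt n r lam - x ∈ Qplus ∧ x - wt n r mu ∈ Qplus}
          = (fun x => x - wt n r mu) ⁻¹'
            {q : Plat | q ∈ Qplus ∧ (wt n r lam - wt n r mu) - q ∈ Qplus} := by
        ext x
        simp only [Set.mem_setOf_eq, Set.mem_preimage]
        constructor
        · rintro ⟨ha, hb⟩
          refine ⟨hb, ?_⟩
          have : wt n r lam - wt n r mu - (x - wt n r mu) = wt n r lam - x := by abel
          rw [this]; exact ha
        · rintro ⟨ha, hb⟩
          have : wt n r lam - wt n r mu - (x - wt n r mu) = wt n r lam - x := by abel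
          rw [this] at hb
          exact ⟨hb, ha⟩
      rw [heq]
      apply Set.Finite.preimage
      · intro a _ b _ hab
        simpa using congrArg (fun y => y + wt n r mu) hab
      · exact interval_finite _
    apply Set.Finite.of_finite_image (f := fun nu => fun r : Fin n => wt n r nu)
    · apply Set.Finite.subset (Set.Finite.pi hB)
      rintro g ⟨nu, ⟨hln, hnm⟩, rfl⟩
      intro r _
      exact ⟨hln.2 r, hnm.2 r⟩
    · intro nu1 _ nu2 _ h
      exact eq_of_wt_eq nu1 nu2 (fun r => congrFun h r)

end
end
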